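/- Let b₁₁, b₁₂, b₂₁, b₂₂ ∈ ℝ and φ, φ* ∈ ℝ. Consider the matrix A(φ) = I + (φ − φ*)·B where B = (b₁₁, b₁₂; b₂₁, b₂₂), with entries α = 1 + tb₁₁, β = tb₁₂, γ = tb₂₁, δ = 1 + tb₂₂ for t = φ − φ*. Let (M̂, Ĥ) be the induced transformation of (M, H) under A(φ), with denominator D₀ = 2αβM + β²H + α² ≠ 0. If additionally b₁₂H − b₂₁ + (b₁₁ − b₂₂)M ≠ 0 and b₁₂Ĥ − b₂₁ + (b₁₁ − b₂₂)M̂ ≠ 0, then (M̂² − Ĥ)/(b₁₂Ĥ − b₂₁ + (b₁₁−b₂₂)M̂)² = (M² − H)/(b₁₂H − b₂₁ + (b₁₁−b₂₂)M)². -/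

import Mathlib

theorem stmt_13 (M H b11 b12 b21 b22 φ φs : ℝ)
    (α β γ δ : ℝ)
    (hα : α = 1 + (φ - φs)*b11) (hβ : β = (φ - φs)*b12)
    (hγ : γ = (φ - φs)*b21) (hδ : δ = 1 + (φ - φs)*b22)
    (hden : 2*α*β*M + β^2*H + α^2 ≠ 0)
    (Mh Hh : ℝ)
    (hMh : Mh = ((α*δ + β*γ)*M + β*δ*H + α*γ) / (2*α*β*M + β^2*H + α^2))
    (hHh : Hh = (2*γ*δ*M + δ^2*H + γ^2) / (2*α*β*M + β^2*H + α^2))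
    (h1 : b12*H - b21 + (b11 - b22)*M ≠ 0)
    (h2 : b12*Hh - b21 + (b11 - b22)*Mh ≠ 0) :
    (Mh^2 - Hh) / (b12*Hh - b21 + (b11 - b22)*Mh)^2 =
      (M^2 - H) / (b12*H - b21 + (b11 - b22)*M)^2 := by
  set D := 2*α*β*M + β^2*H + α^2 with hD
  have e1 : Mh^2 - Hh = (M^2 - H)*(α*δ - β*γ)^2 / D^2 := by
    subst hMh hHh
    field_simp
    ring
  have e2 : b12*Hh - b21 + (b11 - b22)*Mh
      = (b12*H - b21 + (b11 - b22)*M)*(α*δ - β*γ) / D := by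
    subst hMh hHh
    field_simp
    subst hα hβ hγ hδ
    ring
  have hdet : α*δ - β*γ ≠ 0 := by
    intro h
    apply h2
    rw [e2, h, mul_zero, zero_div]
  rw [e1, e2]
  field_simp
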